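/- Let L be a Lie algebra over ℝ, x ∈ L, and Y₁, …, Y_m ∈ L. Let 𝔥 be the Lie subalgebra of L generated by the set {(ad x)ⁿ(Yⱼ) : 1 ≤ j ≤ m, n ∈ ℕ}, where ad x : L → L is z ↦ [x, z]. Then the Lie subalgebra of L generated by {x, Y₁, …, Y_m} equals, as a linear subspace, the sum ℝ·x + 𝔥 of the line spanned by x and the underlying subspace of 𝔥. -/
import Mathlib


/-- Decomposition `ℒ = ℝ·x + 𝔥` of the system algebra of a linear control system with inner
derivation `ad x`: the Lie subalgebra generated by `{x, Y₁, …, Y_m}` equals, as a linear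
subspace, the sum of the line spanned by `x` and the Lie subalgebra `𝔥` generated by the
iterates `(ad x)ⁿ (Yⱼ)`. -/
theorem lieSpan_insert_eq_span_sup_lieSpan_ad_iterates
    (L : Type*) [LieRing L] [LieAlgebra ℝ L] (x : L) (m : ℕ) (Y : Fin m → L)
    (𝔥 : LieSubalgebra ℝ L)
    (h𝔥 : 𝔥 = LieSubalgebra.lieSpan ℝ L
      {z : L | ∃ j : Fin m, ∃ n : ℕ, ((LieAlgebra.ad ℝ L x) ^ n) (Y j) = z}) :
    (LieSubalgebra.lieSpan ℝ L (insert x (Set.range Y))).toSubmodule =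
      Submodule.span ℝ {x} ⊔ 𝔥.toSubmodule := by
  set s := {z : L | ∃ j : Fin m, ∃ n : ℕ, ((LieAlgebra.ad ℝ L x) ^ n) (Y j) = z} with hs
  -- 𝔥 is stable under ad x
  have had : ∀ z ∈ 𝔥, ⁅x, z⁆ ∈ 𝔥 := by
    intro z hz
    let K : LieSubalgebra ℝ L :=
      { carrier := {w | w ∈ 𝔥 ∧ ⁅x, w⁆ ∈ 𝔥}
        add_mem' := fun ha hb => ⟨𝔥.add_mem ha.1 hb.1, by
          rw [lie_add]; exact 𝔥.add_mem ha.2 hb.2⟩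
        zero_mem' := ⟨𝔥.zero_mem, by rw [lie_zero]; exact 𝔥.zero_mem⟩
        smul_mem' := fun c w hw => ⟨𝔥.smul_mem c hw.1, by
          rw [lie_smul]; exact 𝔥.smul_mem c hw.2⟩
        lie_mem' := fun {a b} ha hb => ⟨𝔥.lie_mem ha.1 hb.1, by
          rw [leibniz_lie]
          exact 𝔥.add_mem (𝔥.lie_mem ha.2 hb.1) (𝔥.lie_mem ha.1 hb.2)⟩ }
    have hsK : s ⊆ K := by
      rintro _ ⟨j, n, rfl⟩
      constructor
      · rw [h𝔥]; exact LieSubalgebra.subset_lieSpan ⟨j, n, rfl⟩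
      · rw [h𝔥]
        exact LieSubalgebra.subset_lieSpan ⟨j, n + 1, by rw [pow_succ']; rfl⟩
    have : 𝔥 ≤ K := by rw [h𝔥]; exact LieSubalgebra.lieSpan_le.mpr hsK
    exact (this hz).2
  -- the right-hand side is a Lie subalgebra
  have key : ∀ a ∈ Submodule.span ℝ {x} ⊔ 𝔥.toSubmodule,
      ∀ b ∈ Submodule.span ℝ {x} ⊔ 𝔥.toSubmodule,
      ⁅a, b⁆ ∈ Submodule.span ℝ {x} ⊔ 𝔥.toSubmodule := by
    intro a ha b hb
    obtain ⟨a1, ha1, a2, ha2, rfl⟩ := Submodule.mem_sup.mp ha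
    obtain ⟨b1, hb1, b2, hb2, rfl⟩ := Submodule.mem_sup.mp hb
    obtain ⟨c, rfl⟩ := Submodule.mem_span_singleton.mp ha1
    obtain ⟨d, rfl⟩ := Submodule.mem_span_singleton.mp hb1
    have hax : ⁅a2, x⁆ = -⁅x, a2⁆ := by rw [← lie_skew]
    have h1 : ⁅c • x + a2, d • x + b2⁆ =
        (c • ⁅x, b2⁆ - d • ⁅x, a2⁆) + ⁅a2, b2⁆ := by
      simp only [add_lie, lie_add, smul_lie, lie_smul, lie_self, smul_zero,
        zero_add, hax, smul_neg]
      abel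
    rw [h1]
    refine Submodule.mem_sup_right ?_
    exact 𝔥.toSubmodule.add_mem
      (𝔥.toSubmodule.sub_mem (𝔥.toSubmodule.smul_mem c (had _ hb2))
        (𝔥.toSubmodule.smul_mem d (had _ ha2)))
      (𝔥.lie_mem ha2 hb2)
  let S : LieSubalgebra ℝ L :=
    { toSubmodule := Submodule.span ℝ {x} ⊔ 𝔥.toSubmodule
      lie_mem' := fun {a b} ha hb => key a ha b hb }
  apply le_antisymm
  · have : LieSubalgebra.lieSpan ℝ L (insert x (Set.range Y)) ≤ S := by
      rw [LieSubalgebra.lieSpan_le]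
      rintro z (rfl | ⟨j, rfl⟩)
      · exact Submodule.mem_sup_left (Submodule.mem_span_singleton_self _)
      · refine Submodule.mem_sup_right ?_
        rw [h𝔥]
        exact LieSubalgebra.subset_lieSpan ⟨j, 0, rfl⟩
    exact this
  · refine sup_le ?_ ?_
    · rw [Submodule.span_le, Set.singleton_subset_iff]
      exact LieSubalgebra.subset_lieSpan (Set.mem_insert x _)
    · have : 𝔥 ≤ LieSubalgebra.lieSpan ℝ L (insert x (Set.range Y)) := by
        rw [h𝔥, LieSubalgebra.lieSpan_le]
        rintro _ ⟨j, n, rfl⟩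
        induction n with
        | zero =>
            exact LieSubalgebra.subset_lieSpan (Set.mem_insert_iff.mpr
              (Or.inr ⟨j, rfl⟩))
        | succ n ih =>
            rw [pow_succ']
            exact LieSubalgebra.lie_mem _
              (LieSubalgebra.subset_lieSpan (Set.mem_insert x _)) ih
      exact this
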